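/- Let F be a number field of odd degree n in which 2 is totally ramified and 3 splits completely. Let 𝔮 be the unique prime of O_F above 2 and S = {𝔮}. Then every solution (λ, μ) to the S-unit equation λ + μ = 1 with λ, μ ∈ O_S^× satisfies max{|ord_𝔮(λ)|, |ord_𝔮(μ)|} < 2·ord_𝔮(2) = 2n. -/

import Mathlib

open IsDedekindDomain NumberField

/-- The `𝔮`-adic valuation `ord_𝔮 : F → ℤ` (junk value `0` at `x = 0`). -/
noncomputable def ordQ {K : Type*} [Field K] [NumberField K]
    (v : HeightOneSpectrum (𝓞 K)) (x : K) : ℤ :=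
  if h : v.valuation K x = 0 then 0
  else - Multiplicative.toAdd (WithZero.unzero h)

section Aux

variable {K : Type*} [Field K] [NumberField K]

lemma ordQ_eq (v : HeightOneSpectrum (𝓞 K)) {x : K} {t : ℤ}
    (h : v.valuation K x = ((Multiplicative.ofAdd (-t) : Multiplicative ℤ) : WithZero (Multiplicative ℤ))) :
    ordQ v x = t := by
  have h0 : v.valuation K x ≠ 0 := by rw [h]; exact WithZero.coe_ne_zero
  rw [ordQ, dif_neg h0]
  have hu : WithZero.unzero h0 = Multiplicative.ofAdd (-t) :=
    WithZero.coe_inj.mp ((WithZero.coe_unzero h0).trans h)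
  rw [hu]
  simp

lemma ordQ_spec (v : HeightOneSpectrum (𝓞 K)) {x : K} (h0 : v.valuation K x ≠ 0) :
    v.valuation K x
      = ((Multiplicative.ofAdd (-(ordQ v x)) : Multiplicative ℤ) : WithZero (Multiplicative ℤ)) := by
  have h : ordQ v x = - Multiplicative.toAdd (WithZero.unzero h0) := by
    rw [ordQ, dif_neg h0]
  rw [h, neg_neg, ofAdd_toAdd, WithZero.coe_unzero]

end Aux

section Aux2

open UniqueFactorizationMonoid

variable {K : Type*} [Field K] [NumberField K]

lemma count_le_of_intVal [DecidableEq (Ideal (𝓞 K))] {a b : 𝓞 K} (ha : a ≠ 0) (hb : b ≠ 0)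
    (v : HeightOneSpectrum (𝓞 K))
    (h : v.intValuationDef a ≤ v.intValuationDef b) :
    Multiset.count v.asIdeal (normalizedFactors (Ideal.span {b}))
      ≤ Multiset.count v.asIdeal (normalizedFactors (Ideal.span {a})) := by
  classical
  rw [IsDedekindDomain.HeightOneSpectrum.intValuationDef_if_neg _ ha,
    IsDedekindDomain.HeightOneSpectrum.intValuationDef_if_neg _ hb,
    WithZero.exp_le_exp, neg_le_neg_iff, Nat.cast_le] at h
  rw [count_associates_factors_eq (by simpa using hb) v.isPrime v.ne_bot,
    count_associates_factors_eq (by simpa using ha) v.isPrime v.ne_bot] at h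
  convert h

lemma exists_integer {x : K}
    (hx : ∀ v : HeightOneSpectrum (𝓞 K), v.valuation K x ≤ 1) :
    ∃ r : 𝓞 K, algebraMap (𝓞 K) K r = x := by
  classical
  obtain ⟨a, b, hb, hab⟩ := IsFractionRing.div_surjective (A := 𝓞 K) x
  have hb0 : b ≠ 0 := nonZeroDivisors.ne_zero hb
  by_cases ha0 : a = 0
  · exact ⟨0, by rw [← hab, ha0]; simp⟩
  have hbK : algebraMap (𝓞 K) K b ≠ 0 :=
    IsFractionRing.to_map_ne_zero_of_mem_nonZeroDivisors hb
  have hint : ∀ v : HeightOneSpectrum (𝓞 K),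
      v.intValuationDef a ≤ v.intValuationDef b := by
    intro v
    have h1 := hx v
    rw [← hab, map_div₀] at h1
    rw [IsDedekindDomain.HeightOneSpectrum.valuation_of_algebraMap,
      IsDedekindDomain.HeightOneSpectrum.valuation_of_algebraMap,
      IsDedekindDomain.HeightOneSpectrum.intValuation_apply,
      IsDedekindDomain.HeightOneSpectrum.intValuation_apply] at h1
    have hbv : v.intValuationDef b ≠ 0 :=
      IsDedekindDomain.HeightOneSpectrum.intValuation_ne_zero v b hb0
    rw [div_le_one₀ (zero_lt_iff.mpr hbv)] at h1
    exact h1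
  have hdvd : b ∣ a := by
    rw [← Ideal.span_singleton_le_span_singleton]
    refine Ideal.le_of_dvd ?_
    rw [dvd_iff_normalizedFactors_le_normalizedFactors
      (by simpa using hb0) (by simpa using ha0), Multiset.le_iff_count]
    intro P
    by_cases hP : P ∈ normalizedFactors (Ideal.span {b})
    · have hPprime : Prime P := prime_of_normalized_factor P hP
      have hPbot : P ≠ ⊥ := by
        rintro rfl
        have h2 := Ideal.le_of_dvd (dvd_of_mem_normalizedFactors hP)
        rw [le_bot_iff] at h2
        simp [Ideal.span_singleton_eq_bot, hb0] at h2
      exact count_le_of_intVal ha0 hb0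
        ⟨P, Ideal.isPrime_of_prime hPprime, hPbot⟩ (hint _)
    · simp [Multiset.count_eq_zero_of_notMem hP]
  obtain ⟨c, rfl⟩ := hdvd
  refine ⟨c, ?_⟩
  rw [← hab, map_mul, mul_comm, mul_div_assoc, div_self hbK, mul_one]

lemma exists_unit {x : K} (hx0 : x ≠ 0)
    (hx : ∀ v : HeightOneSpectrum (𝓞 K), v.valuation K x = 1) :
    ∃ u : (𝓞 K)ˣ, algebraMap (𝓞 K) K u = x := by
  obtain ⟨r, hr⟩ := exists_integer (x := x) (fun v => (hx v).le)
  obtain ⟨s, hs⟩ := exists_integer (x := x⁻¹) (fun v => by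
    rw [map_inv₀, hx v, inv_one])
  have hrs : r * s = 1 := by
    apply IsFractionRing.injective (𝓞 K) K
    rw [map_mul, map_one, hr, hs, mul_inv_cancel₀ hx0]
  exact ⟨⟨r, s, hrs, by rwa [mul_comm] at hrs⟩, hr⟩

end Aux2

lemma mem_multiset_prod {R : Type*} [CommRing R] [IsDedekindDomain R] (x : R) :
    ∀ s : Multiset (Ideal R), s.Nodup → (∀ P ∈ s, P ≠ ⊥) → (∀ P ∈ s, P.IsPrime) →
      (∀ P ∈ s, x ∈ P) → x ∈ s.prod := by
  intro s
  induction s using Multiset.induction with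
  | empty => simp
  | cons P t ih =>
    intro hnd hbot hpr hx
    rw [Multiset.prod_cons]
    obtain ⟨hPt, hnd'⟩ := Multiset.nodup_cons.mp hnd
    have hxt : x ∈ t.prod := ih hnd' (fun Q hQ => hbot Q (Multiset.mem_cons_of_mem hQ))
      (fun Q hQ => hpr Q (Multiset.mem_cons_of_mem hQ))
      (fun Q hQ => hx Q (Multiset.mem_cons_of_mem hQ))
    have hPP : P.IsPrime := hpr P (Multiset.mem_cons_self P t)
    have hPmax : P.IsMaximal := hPP.isMaximal (hbot P (Multiset.mem_cons_self P t))
    have hcop : P ⊔ t.prod = ⊤ := by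
      by_contra hne
      have hle : P ⊔ t.prod = P := by
        rcases hPmax.eq_of_le hne le_sup_left with h
        exact h.symm
      have htP : t.prod ≤ P := by
        rw [← hle]; exact le_sup_right
      obtain ⟨Q, hQt, hQP⟩ := (Ideal.IsPrime.multiset_prod_le hPP).mp htP
      have hQmax : (Q : Ideal R).IsMaximal :=
        (hpr Q (Multiset.mem_cons_of_mem hQt)).isMaximal
          (hbot Q (Multiset.mem_cons_of_mem hQt))
      have : Q = P := hQmax.eq_of_le hPmax.ne_top hQP
      exact hPt (this ▸ hQt)
    rw [Ideal.mul_eq_inf_of_coprime hcop]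
    exact Ideal.mem_inf.mpr ⟨hx P (Multiset.mem_cons_self P t), hxt⟩

lemma norm_mod {K : Type*} [Field K] [NumberField K] (q : ℕ) {m t : 𝓞 K} {a : ℤ}
    (h : m = (a : 𝓞 K) + (q : 𝓞 K) * t) :
    ((Algebra.norm ℤ m : ℤ) : ZMod q) = (a : ZMod q) ^ (Module.finrank ℤ (𝓞 K)) := by
  classical
  let B := Module.Free.chooseBasis ℤ (𝓞 K)
  rw [Algebra.norm_eq_matrix_det B]
  rw [show ((((Algebra.leftMulMatrix B) m).det : ℤ) : ZMod q)
      = (Int.castRingHom (ZMod q)) ((Algebra.leftMulMatrix B) m).det from rfl,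
    RingHom.map_det]
  have hM : (Int.castRingHom (ZMod q)).mapMatrix (Algebra.leftMulMatrix B m)
      = (a : ZMod q) • (1 : Matrix _ _ (ZMod q)) := by
    have hm : Algebra.leftMulMatrix B m
        = a • (1 : Matrix _ _ ℤ) + (q : ℤ) • Algebra.leftMulMatrix B t := by
      have h1 : (a : 𝓞 K) = algebraMap ℤ (𝓞 K) a := by simp
      have h2 : ((q : 𝓞 K) : 𝓞 K) = algebraMap ℤ (𝓞 K) (q : ℤ) := by simp
      rw [h, map_add, h1, AlgHom.commutes, Algebra.algebraMap_eq_smul_one,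
        h2, map_mul, AlgHom.commutes, Algebra.algebraMap_eq_smul_one,
        smul_mul_assoc, one_mul]
    ext i j
    simp only [hm, RingHom.mapMatrix_apply, Matrix.map_apply, Matrix.add_apply,
      Matrix.smul_apply, Matrix.one_apply, smul_eq_mul, mul_ite, mul_one, mul_zero]
    push_cast
    simp [ZMod.natCast_self]
  rw [hM, Matrix.det_smul, Matrix.det_one, mul_one,
    Module.finrank_eq_card_chooseBasisIndex ℤ (𝓞 K)]

set_option maxHeartbeats 1000000 in
set_option synthInstance.maxHeartbeats 400000 in
lemma exists_int_rep {R : Type*} [CommRing R] (P : Ideal R) (hP : P ≠ ⊤)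
    (hcomap : Ideal.comap (algebraMap ℤ R) P = Ideal.span {(3 : ℤ)})
    (hf : Ideal.inertiaDeg' (Ideal.span {(3 : ℤ)}) P = 1)
    (a : R) : ∃ k : ℤ, Ideal.Quotient.mk P a = Ideal.Quotient.mk P ((k : ℤ) : R) := by
  classical
  haveI h3max : (Ideal.span {(3 : ℤ)}).IsMaximal :=
    PrincipalIdealRing.isMaximal_of_irreducible (by norm_num : Prime (3 : ℤ)).irreducible
  letI : Field (ℤ ⧸ Ideal.span {(3 : ℤ)}) := Ideal.Quotient.field _
  letI alg : Algebra (ℤ ⧸ Ideal.span {(3 : ℤ)}) (R ⧸ P) :=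
    Ideal.Quotient.algebraQuotientOfLEComap (le_of_eq hcomap.symm)
  haveI : Nontrivial (R ⧸ P) := Ideal.Quotient.nontrivial_iff.mpr hP
  unfold Ideal.inertiaDeg' at hf
  rw [dif_pos hcomap] at hf
  obtain ⟨c, hc⟩ := (finrank_eq_one_iff_of_nonzero' (1 : R ⧸ P) one_ne_zero).mp hf
    (Ideal.Quotient.mk P a)
  obtain ⟨k, rfl⟩ := Ideal.Quotient.mk_surjective c
  refine ⟨k, ?_⟩
  rw [← hc, Algebra.smul_def, mul_one]
  have : algebraMap (ℤ ⧸ Ideal.span {(3 : ℤ)}) (R ⧸ P) (Ideal.Quotient.mk _ k)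
      = Ideal.Quotient.mk P (algebraMap ℤ R k) := rfl
  rw [this, algebraMap_int_eq, eq_intCast]

section Main

open UniqueFactorizationMonoid

variable {F : Type*} [Field F] [NumberField F]

set_option maxHeartbeats 1000000 in
set_option synthInstance.maxHeartbeats 400000 in
lemma prime_mem_of_three_mem
    (𝔮 : HeightOneSpectrum (𝓞 F)) {n : ℕ} (hn1 : n ≠ 0)
    (hram : Ideal.span {(2 : 𝓞 F)} = 𝔮.asIdeal ^ n)
    (hsplit : ∀ P : Ideal (𝓞 F), P.IsPrime → (3 : 𝓞 F) ∈ P →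
      Ideal.ramificationIdx' (Ideal.span {(3 : ℤ)}) P = 1 ∧
      Ideal.inertiaDeg' (Ideal.span {(3 : ℤ)}) P = 1)
    {l m : 𝓞 F} (hml : m + l = 1)
    (hl : ∀ v : HeightOneSpectrum (𝓞 F), v ≠ 𝔮 → v.intValuationDef l = 1)
    (hm : ∀ v : HeightOneSpectrum (𝓞 F), v ≠ 𝔮 → v.intValuationDef m = 1)
    (P : Ideal (𝓞 F)) (hPpr : P.IsPrime) (h3P : (3 : 𝓞 F) ∈ P) :
    m + 1 ∈ P := by
  classical
  have h30 : (3 : 𝓞 F) ≠ 0 := by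
    intro h
    have := congrArg (algebraMap (𝓞 F) F) h
    simp only [map_ofNat, map_zero] at this
    norm_num at this
  have hP0 : P ≠ ⊥ := by rintro rfl; exact h30 h3P
  set v : HeightOneSpectrum (𝓞 F) := ⟨P, hPpr, hP0⟩ with hv
  have hv𝔮 : v ≠ 𝔮 := by
    intro h
    have h2 : (2 : 𝓞 F) ∈ P := by
      have h2' : (2 : 𝓞 F) ∈ Ideal.span {(2 : 𝓞 F)} := Ideal.mem_span_singleton_self _
      rw [hram] at h2'
      have h2'' := Ideal.pow_le_self (I := 𝔮.asIdeal) hn1 h2'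
      have hPq : 𝔮.asIdeal = P := by rw [← h]
      rw [hPq] at h2''
      exact h2''
    have h1 : (1 : 𝓞 F) ∈ P := by
      have h4 := P.sub_mem h3P h2
      norm_num at h4
      exact h4
    exact hPpr.ne_top ((Ideal.eq_top_iff_one P).mpr h1)
  have hnotmem : ∀ a : 𝓞 F, v.intValuationDef a = 1 → a ∉ P := by
    intro a hva ha
    have hlt : v.intValuationDef a < 1 := by
      rw [← IsDedekindDomain.HeightOneSpectrum.intValuation_apply,
        IsDedekindDomain.HeightOneSpectrum.intValuation_lt_one_iff_dvd]
      rw [Ideal.dvd_iff_le, Ideal.span_singleton_le_iff_mem]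
      exact ha
    rw [hva] at hlt
    exact lt_irrefl _ hlt
  have hlP : l ∉ P := hnotmem l (hl v hv𝔮)
  have hmP : m ∉ P := hnotmem m (hm v hv𝔮)
  have hcomap : Ideal.comap (algebraMap ℤ (𝓞 F)) P = Ideal.span {(3 : ℤ)} := by
    have h3max : (Ideal.span {(3 : ℤ)}).IsMaximal :=
      PrincipalIdealRing.isMaximal_of_irreducible (by norm_num : Prime (3 : ℤ)).irreducible
    have hle : Ideal.span {(3 : ℤ)} ≤ Ideal.comap (algebraMap ℤ (𝓞 F)) P := by
      rw [Ideal.span_le]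
      intro z hz
      rw [Set.mem_singleton_iff] at hz
      subst hz
      simp only [SetLike.mem_coe, Ideal.mem_comap]
      have h5 : algebraMap ℤ (𝓞 F) 3 = (3 : 𝓞 F) := by simp
      rw [h5]; exact h3P
    exact (h3max.eq_of_le (Ideal.comap_isPrime _ P).ne_top hle).symm
  have hsurj := exists_int_rep P hPpr.ne_top hcomap (hsplit P hPpr h3P).2
  have hq3 : Ideal.Quotient.mk P (3 : 𝓞 F) = 0 := Ideal.Quotient.eq_zero_iff_mem.mpr h3P
  obtain ⟨k, hk⟩ := hsurj l
  obtain ⟨d, r, hdr, hr0, hr3⟩ : ∃ d r : ℤ, k = 3 * d + r ∧ 0 ≤ r ∧ r < 3 :=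
    ⟨k / 3, k % 3, by omega, by omega, by omega⟩
  have hkr : Ideal.Quotient.mk P l = Ideal.Quotient.mk P ((r : ℤ) : 𝓞 F) := by
    rw [hk, hdr]
    have hcast : (((3 * d + r : ℤ)) : 𝓞 F) = (3 : 𝓞 F) * ((d : ℤ) : 𝓞 F) + ((r : ℤ) : 𝓞 F) := by
      push_cast
      ring
    rw [hcast, map_add, map_mul, hq3, zero_mul, zero_add]
  have hmlq : Ideal.Quotient.mk P m = 1 - Ideal.Quotient.mk P l := by
    have h6 : m = 1 - l := by linear_combination hml
    rw [h6, map_sub, map_one]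
  interval_cases r
  · exfalso
    apply hlP
    apply Ideal.Quotient.eq_zero_iff_mem.mp
    rw [hkr]
    simp
  · exfalso
    apply hmP
    apply Ideal.Quotient.eq_zero_iff_mem.mp
    rw [hmlq, hkr]
    simp
  · have h2cast : (((2 : ℤ)) : 𝓞 F) = (2 : 𝓞 F) := by norm_num
    have hl2 : Ideal.Quotient.mk P l = (2 : 𝓞 F ⧸ P) := by
      rw [hkr, h2cast]
      exact map_ofNat _ 2
    have hfin : Ideal.Quotient.mk P (m + 1) = 0 := by
      rw [map_add, map_one, hmlq, hl2]
      ring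
    exact Ideal.Quotient.eq_zero_iff_mem.mp hfin

set_option maxHeartbeats 1000000 in
set_option synthInstance.maxHeartbeats 400000 in
lemma mem_span_three
    (𝔮 : HeightOneSpectrum (𝓞 F)) {n : ℕ} (hn1 : n ≠ 0)
    (hram : Ideal.span {(2 : 𝓞 F)} = 𝔮.asIdeal ^ n)
    (hsplit : ∀ P : Ideal (𝓞 F), P.IsPrime → (3 : 𝓞 F) ∈ P →
      Ideal.ramificationIdx' (Ideal.span {(3 : ℤ)}) P = 1 ∧
      Ideal.inertiaDeg' (Ideal.span {(3 : ℤ)}) P = 1)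
    {l m : 𝓞 F} (hml : m + l = 1)
    (hl : ∀ v : HeightOneSpectrum (𝓞 F), v ≠ 𝔮 → v.intValuationDef l = 1)
    (hm : ∀ v : HeightOneSpectrum (𝓞 F), v ≠ 𝔮 → v.intValuationDef m = 1) :
    m + 1 ∈ Ideal.span {(3 : 𝓞 F)} := by
  classical
  set J : Ideal (𝓞 F) := Ideal.span {(3 : 𝓞 F)} with hJ
  have h30 : (3 : 𝓞 F) ≠ 0 := by
    intro h
    have := congrArg (algebraMap (𝓞 F) F) h
    simp only [map_ofNat, map_zero] at this
    norm_num at this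
  have hJ0 : J ≠ ⊥ := by
    rw [hJ, Ne, Ideal.span_singleton_eq_bot]
    exact h30
  have hJmap : Ideal.map (algebraMap ℤ (𝓞 F)) (Ideal.span {(3 : ℤ)}) = J := by
    rw [Ideal.map_span, Set.image_singleton, hJ]
    norm_num
  -- every normalized factor of J is counted once
  have hfac : ∀ P ∈ normalizedFactors J, P.IsPrime ∧ P ≠ ⊥ ∧ (3 : 𝓞 F) ∈ P ∧
      Multiset.count P (normalizedFactors J) = 1 := by
    intro P hP
    have hPdvd : P ∣ J := dvd_of_mem_normalizedFactors hP
    have hJP : J ≤ P := Ideal.le_of_dvd hPdvd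
    have hPbot : P ≠ ⊥ := by
      rintro rfl
      rw [le_bot_iff] at hJP
      exact hJ0 hJP
    have hPpr : P.IsPrime := Ideal.isPrime_of_prime (prime_of_normalized_factor P hP)
    have h3P : (3 : 𝓞 F) ∈ P := hJP (Ideal.mem_span_singleton_self _)
    refine ⟨hPpr, hPbot, h3P, ?_⟩
    have he := (hsplit P hPpr h3P).1
    rw [Ideal.IsDedekindDomain.ramificationIdx'_eq_normalizedFactors_count
      (by rw [hJmap]; exact hJ0) hPpr hPbot, hJmap] at he
    exact he
  have hnodup : (normalizedFactors J).Nodup := by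
    rw [Multiset.nodup_iff_count_le_one]
    intro P
    by_cases hP : P ∈ normalizedFactors J
    · exact ((hfac P hP).2.2.2).le
    · rw [Multiset.count_eq_zero_of_notMem hP]
      norm_num
  have hprod : (normalizedFactors J).prod = J :=
    associated_iff_eq.mp (prod_normalizedFactors hJ0)

  rw [← hprod]
  exact mem_multiset_prod (m + 1) _ hnodup (fun P hP => (hfac P hP).2.1)
    (fun P hP => (hfac P hP).1)
    (fun P hP => prime_mem_of_three_mem 𝔮 hn1 hram hsplit hml hl hm P
      (hfac P hP).1 (hfac P hP).2.2.1)

set_option maxHeartbeats 1000000 in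
set_option synthInstance.maxHeartbeats 400000 in
lemma key_lemma {n : ℕ} (hn : Module.finrank ℚ F = n) (hnodd : Odd n)
    (𝔮 : HeightOneSpectrum (𝓞 F))
    (hram : Ideal.span {(2 : 𝓞 F)} = 𝔮.asIdeal ^ n)
    (hsplit : ∀ P : Ideal (𝓞 F), P.IsPrime → (3 : 𝓞 F) ∈ P →
      Ideal.ramificationIdx' (Ideal.span {(3 : ℤ)}) P = 1 ∧
      Ideal.inertiaDeg' (Ideal.span {(3 : ℤ)}) P = 1)
    (x y : Fˣ)
    (hx : ∀ v : HeightOneSpectrum (𝓞 F), v ≠ 𝔮 → v.valuation F (x : F) = 1)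
    (hy : ∀ v : HeightOneSpectrum (𝓞 F), v ≠ 𝔮 → v.valuation F (y : F) = 1)
    (hsum : (x : F) + (y : F) = 1) :
    ordQ 𝔮 (x : F) < 2 * n := by
  by_contra hcon
  push_neg at hcon
  have hn1 : n ≠ 0 := by
    rcases hnodd with ⟨j, hj⟩
    omega
  have hx0 : (x : F) ≠ 0 := Units.ne_zero x
  have hv0 : 𝔮.valuation F (x : F) ≠ 0 := (Valuation.ne_zero_iff _).mpr hx0
  have hspec := ordQ_spec 𝔮 hv0
  have hle : 𝔮.valuation F (x : F)
      ≤ ((Multiplicative.ofAdd (-(2 * (n : ℤ))) : Multiplicative ℤ)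
          : WithZero (Multiplicative ℤ)) := by
    rw [hspec, WithZero.coe_le_coe, Multiplicative.ofAdd_le]
    omega
  have hlt1 : 𝔮.valuation F (x : F) < 1 := by
    refine lt_of_le_of_lt hle ?_
    rw [show (1 : WithZero (Multiplicative ℤ))
        = ((Multiplicative.ofAdd (0 : ℤ) : Multiplicative ℤ)
          : WithZero (Multiplicative ℤ)) by rfl]
    rw [WithZero.coe_lt_coe, Multiplicative.ofAdd_lt]
    omega
  have hallx : ∀ v : HeightOneSpectrum (𝓞 F), v.valuation F (x : F) ≤ 1 := by
    intro v
    by_cases h : v = 𝔮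
    · subst h; exact hlt1.le
    · exact (hx v h).le
  obtain ⟨l, hlx⟩ := exists_integer hallx
  have hyval : ∀ v : HeightOneSpectrum (𝓞 F), v.valuation F (y : F) = 1 := by
    intro v
    by_cases h : v = 𝔮
    · subst h
      have h1 : (y : F) = 1 - (x : F) := by linear_combination hsum
      rw [h1]
      exact Valuation.map_one_sub_of_lt _ hlt1
    · exact hy v h
  obtain ⟨u, hu⟩ := exists_unit (Units.ne_zero y) hyval
  set m : 𝓞 F := (u : 𝓞 F) with hmdef
  have hml : m + l = 1 := by
    apply IsFractionRing.injective (𝓞 F) F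
    rw [map_add, map_one, hu, hlx]
    linear_combination hsum
  have hlv : ∀ v : HeightOneSpectrum (𝓞 F), v ≠ 𝔮 → v.intValuationDef l = 1 := by
    intro v h
    have h1 := hx v h
    rw [← hlx, IsDedekindDomain.HeightOneSpectrum.valuation_of_algebraMap,
      IsDedekindDomain.HeightOneSpectrum.intValuation_apply] at h1
    exact h1
  have hmv : ∀ v : HeightOneSpectrum (𝓞 F), v ≠ 𝔮 → v.intValuationDef m = 1 := by
    intro v h
    have h1 := hyval v
    rw [← hu, IsDedekindDomain.HeightOneSpectrum.valuation_of_algebraMap,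
      IsDedekindDomain.HeightOneSpectrum.intValuation_apply] at h1
    exact h1
  -- `l` is divisible by 4
  have hdvd : 𝔮.asIdeal ^ (2 * n) ∣ Ideal.span {l} := by
    rw [← IsDedekindDomain.HeightOneSpectrum.intValuation_le_pow_iff_dvd]
    have h1 : 𝔮.valuation F (algebraMap (𝓞 F) F l)
        ≤ ((Multiplicative.ofAdd (-((2 * n : ℕ) : ℤ)) : Multiplicative ℤ)
          : WithZero (Multiplicative ℤ)) := by
      rw [hlx]
      have hcast : (-((2 * n : ℕ) : ℤ)) = -(2 * (n : ℤ)) := by push_cast; ring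
      rw [hcast]
      exact hle
    rw [IsDedekindDomain.HeightOneSpectrum.valuation_of_algebraMap,
      IsDedekindDomain.HeightOneSpectrum.intValuation_apply] at h1
    exact h1
  have hspan4 : Ideal.span {(4 : 𝓞 F)} = 𝔮.asIdeal ^ (2 * n) := by
    have h1 : (4 : 𝓞 F) = 2 * 2 := by norm_num
    rw [h1, ← Ideal.span_singleton_mul_span_singleton, hram, ← pow_add, two_mul]
  obtain ⟨t, hlt4⟩ : (4 : 𝓞 F) ∣ l := by
    rw [← Ideal.span_singleton_le_span_singleton, hspan4]
    exact Ideal.le_of_dvd hdvd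
  -- norm computations
  have hrank : Module.finrank ℤ (𝓞 F) = n := by
    rw [NumberField.RingOfIntegers.rank, hn]
  have hm4 : m = ((1 : ℤ) : 𝓞 F) + ((4 : ℕ) : 𝓞 F) * (-t) := by
    have h1 : m = 1 - l := by linear_combination hml
    rw [h1, hlt4]
    push_cast
    ring
  have hN4 : ((Algebra.norm ℤ m : ℤ) : ZMod 4) = 1 := by
    rw [norm_mod 4 hm4]
    norm_num
  obtain ⟨s, hs3⟩ : (3 : 𝓞 F) ∣ m + 1 := by
    rw [← Ideal.mem_span_singleton]
    exact mem_span_three 𝔮 hn1 hram hsplit hml hlv hmv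
  have hm3 : m = ((-1 : ℤ) : 𝓞 F) + ((3 : ℕ) : 𝓞 F) * s := by
    push_cast
    linear_combination hs3
  have hN3 : ((Algebra.norm ℤ m : ℤ) : ZMod 3) = -1 := by
    rw [norm_mod 3 hm3, hrank]
    push_cast
    exact Odd.neg_one_pow hnodd
  have hunit : IsUnit (Algebra.norm ℤ m) := u.isUnit.map (Algebra.norm ℤ)
  rcases Int.isUnit_iff.mp hunit with h | h
  · rw [h] at hN3
    norm_num at hN3
    exact absurd hN3 (by decide)
  · rw [h] at hN4
    norm_num at hN4
    exact absurd hN4 (by decide)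

lemma ordQ_inv {K : Type*} [Field K] [NumberField K] (v : HeightOneSpectrum (𝓞 K))
    {x : K} (hx : x ≠ 0) : ordQ v x⁻¹ = - ordQ v x := by
  have h0 : v.valuation K x ≠ 0 := (Valuation.ne_zero_iff _).mpr hx
  have hs := ordQ_spec v h0
  apply ordQ_eq
  rw [map_inv₀, hs, neg_neg, ← WithZero.coe_inv, ofAdd_neg, inv_inv]

lemma ordQ_two (𝔮 : HeightOneSpectrum (𝓞 F)) {n : ℕ} (hn1 : n ≠ 0)
    (hram : Ideal.span {(2 : 𝓞 F)} = 𝔮.asIdeal ^ n) :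
    ordQ 𝔮 (2 : F) = n := by
  have h2 : (2 : F) = algebraMap (𝓞 F) F (2 : 𝓞 F) :=
    (map_ofNat (algebraMap (𝓞 F) F) 2).symm
  have h20 : (2 : F) ≠ 0 := two_ne_zero
  have hv0 : 𝔮.valuation F (2 : F) ≠ 0 := (Valuation.ne_zero_iff _).mpr h20
  have hspec := ordQ_spec 𝔮 hv0
  have hle : 𝔮.valuation F (2 : F)
      ≤ ((Multiplicative.ofAdd (-(n : ℤ)) : Multiplicative ℤ)
        : WithZero (Multiplicative ℤ)) := by
    rw [h2, IsDedekindDomain.HeightOneSpectrum.valuation_of_algebraMap,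
      IsDedekindDomain.HeightOneSpectrum.intValuation_apply]
    exact (𝔮.intValuation_le_pow_iff_dvd _ _).mpr (by rw [hram])
  have hnle : ¬ 𝔮.valuation F (2 : F)
      ≤ ((Multiplicative.ofAdd (-((n + 1 : ℕ) : ℤ)) : Multiplicative ℤ)
        : WithZero (Multiplicative ℤ)) := by
    rw [h2, IsDedekindDomain.HeightOneSpectrum.valuation_of_algebraMap]
    intro hle'
    have hdvd := (𝔮.intValuation_le_pow_iff_dvd _ _).mp hle'
    rw [hram] at hdvd
    have hq0 : 𝔮.asIdeal ^ n ≠ 0 := pow_ne_zero n 𝔮.ne_bot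
    rw [pow_succ] at hdvd
    have h1 : 𝔮.asIdeal ^ n * 𝔮.asIdeal ∣ 𝔮.asIdeal ^ n * 1 := by
      rwa [mul_one]
    have h2' : 𝔮.asIdeal ∣ 1 := (mul_dvd_mul_iff_left hq0).mp h1
    have h3 : IsUnit 𝔮.asIdeal := isUnit_of_dvd_one h2'
    rw [Ideal.isUnit_iff] at h3
    exact 𝔮.isPrime.ne_top h3
  rw [hspec, WithZero.coe_le_coe, Multiplicative.ofAdd_le] at hle hnle
  push_cast at hle hnle
  omega

end Main

/-- Let `F` be a number field of odd degree `n` in which `2` is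
totally ramified (`2𝓞 F = 𝔮^n`) and `3` splits completely.  With `S = {𝔮}`, every
solution `(λ, μ)` of the `S`-unit equation `λ + μ = 1` satisfies
`max(|ord_𝔮 λ|, |ord_𝔮 μ|) < 2·ord_𝔮(2) = 2n`. -/
theorem sunit_solution_ord_lt_two_n
    (F : Type*) [Field F] [NumberField F] (n : ℕ) (hn : Module.finrank ℚ F = n)
    (hnodd : Odd n)
    (𝔮 : HeightOneSpectrum (𝓞 F))
    (hram : Ideal.span {(2 : 𝓞 F)} = 𝔮.asIdeal ^ n)
    (hsplit : ∀ P : Ideal (𝓞 F), P.IsPrime → (3 : 𝓞 F) ∈ P →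
      Ideal.ramificationIdx' (Ideal.span {(3 : ℤ)}) P = 1 ∧
      Ideal.inertiaDeg' (Ideal.span {(3 : ℤ)}) P = 1)
    (lam mu : Fˣ)
    (hlam : lam ∈ ({𝔮} : Set (HeightOneSpectrum (𝓞 F))).unit F)
    (hmu : mu ∈ ({𝔮} : Set (HeightOneSpectrum (𝓞 F))).unit F)
    (hsum : (lam : F) + (mu : F) = 1) :
    max |ordQ 𝔮 (lam : F)| |ordQ 𝔮 (mu : F)| < 2 * ordQ 𝔮 (2 : F) ∧
      2 * ordQ 𝔮 (2 : F) = 2 * n := by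
  have hn1 : n ≠ 0 := by rcases hnodd with ⟨j, hj⟩; omega
  have hq2 : ordQ 𝔮 (2 : F) = n := ordQ_two 𝔮 hn1 hram
  have hxlam : ∀ v : HeightOneSpectrum (𝓞 F), v ≠ 𝔮 → v.valuation F (lam : F) = 1 :=
    fun v hv => hlam v (by simpa using hv)
  have hxmu : ∀ v : HeightOneSpectrum (𝓞 F), v ≠ 𝔮 → v.valuation F (mu : F) = 1 :=
    fun v hv => hmu v (by simpa using hv)
  have hlam0 : (lam : F) ≠ 0 := Units.ne_zero lam
  have hmu0 : (mu : F) ≠ 0 := Units.ne_zero mu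
  have A1 : ordQ 𝔮 (lam : F) < 2 * n :=
    key_lemma hn hnodd 𝔮 hram hsplit lam mu hxlam hxmu hsum
  have A2 : ordQ 𝔮 (mu : F) < 2 * n :=
    key_lemma hn hnodd 𝔮 hram hsplit mu lam hxmu hxlam (by linear_combination hsum)
  have hxinv : ∀ v : HeightOneSpectrum (𝓞 F), v ≠ 𝔮 →
      v.valuation F ((lam⁻¹ : Fˣ) : F) = 1 := by
    intro v hv
    rw [Units.val_inv_eq_inv_val, map_inv₀, hxlam v hv, inv_one]
  have hyinv : ∀ v : HeightOneSpectrum (𝓞 F), v ≠ 𝔮 →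
      v.valuation F ((-(mu * lam⁻¹) : Fˣ) : F) = 1 := by
    intro v hv
    rw [Units.val_neg, Units.val_mul, Units.val_inv_eq_inv_val, Valuation.map_neg,
      map_mul, map_inv₀, hxlam v hv, hxmu v hv, inv_one, mul_one]
  have hsum3 : ((lam⁻¹ : Fˣ) : F) + ((-(mu * lam⁻¹) : Fˣ) : F) = 1 := by
    rw [Units.val_neg, Units.val_mul, Units.val_inv_eq_inv_val]
    field_simp
    linear_combination -hsum
  have A3 : ordQ 𝔮 ((lam⁻¹ : Fˣ) : F) < 2 * n :=
    key_lemma hn hnodd 𝔮 hram hsplit lam⁻¹ (-(mu * lam⁻¹)) hxinv hyinv hsum3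
  have hxinv' : ∀ v : HeightOneSpectrum (𝓞 F), v ≠ 𝔮 →
      v.valuation F ((mu⁻¹ : Fˣ) : F) = 1 := by
    intro v hv
    rw [Units.val_inv_eq_inv_val, map_inv₀, hxmu v hv, inv_one]
  have hyinv' : ∀ v : HeightOneSpectrum (𝓞 F), v ≠ 𝔮 →
      v.valuation F ((-(lam * mu⁻¹) : Fˣ) : F) = 1 := by
    intro v hv
    rw [Units.val_neg, Units.val_mul, Units.val_inv_eq_inv_val, Valuation.map_neg,
      map_mul, map_inv₀, hxmu v hv, hxlam v hv, inv_one, mul_one]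
  have hsum4 : ((mu⁻¹ : Fˣ) : F) + ((-(lam * mu⁻¹) : Fˣ) : F) = 1 := by
    rw [Units.val_neg, Units.val_mul, Units.val_inv_eq_inv_val]
    field_simp
    linear_combination -hsum
  have A4 : ordQ 𝔮 ((mu⁻¹ : Fˣ) : F) < 2 * n :=
    key_lemma hn hnodd 𝔮 hram hsplit mu⁻¹ (-(lam * mu⁻¹)) hxinv' hyinv' hsum4
  rw [Units.val_inv_eq_inv_val, ordQ_inv 𝔮 hlam0] at A3
  rw [Units.val_inv_eq_inv_val, ordQ_inv 𝔮 hmu0] at A4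
  constructor
  · rw [hq2]
    exact max_lt (abs_lt.mpr ⟨by omega, by omega⟩) (abs_lt.mpr ⟨by omega, by omega⟩)
  · rw [hq2]
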